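/- Let 0 < p < 1, q = 1 − p, let b be a boundary with coordinates b(τ) = (x(τ), t(τ)) and exit weights π, let c₀ = (x₀, t₀) ∈ ℤ × ℤ, let n ≤ −1 be an integer, and let i₁ ∈ ℤ be such that t(τ) ≥ t₀ for all τ ≥ i₁. Then the series ∑_{m=0}^{∞} π(i₁ + m) · F̂_n( b(i₁ + m) − c₀ ) converges (HasSum), and its sum equals −F̂_{n+1}( b(i₁) − c₀ + (1, 0) ). -/

import Mathlib

open Complex Metric Finset

/-- A staircase-like boundary in the space-time plane: at each `τ` the boundary makes
either a horizontal step `(-1, 0)` or a vertical step `(0, 1)`. -/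
structure Boundary where
  b : ℤ → ℤ × ℤ
  step : ∀ τ : ℤ, b (τ + 1) = b τ + (-1, 0) ∨ b (τ + 1) = b τ + (0, 1)

/-- Exit weight: `p` for a vertical step, `1` for a horizontal step. -/
def exitWeight (p : ℝ) (B : Boundary) (τ : ℤ) : ℝ :=
  if B.b (τ + 1) = B.b τ + (0, 1) then p else 1

/-- The function `F̂_n(x,t)` as a contour integral over the circle `|w − 1/2| = R`
with `1/2 < R < 1/2 + p/q`, enclosing `0` and `1` but not `−p/q`. -/
noncomputable def Fhat (p R : ℝ) (n : ℤ) (z : ℤ × ℤ) : ℂ :=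
  (2 * Real.pi * Complex.I)⁻¹ *
    ∮ w in C(1/2, R), ((1 - p : ℂ) + p / w) ^ z.2 * (1 - w) ^ (-n) * w ^ (z.1 - 1)

namespace TSB

variable {p R : ℝ}

lemma half_abs : ‖(1/2 : ℂ)‖ = 1/2 := by
  simp [norm_div]

lemma sphere_ne_zero (hR1 : 1/2 < R) {w : ℂ} (hw : w ∈ sphere (1/2 : ℂ) R) : w ≠ 0 := by
  intro h
  rw [mem_sphere_iff_norm, h, zero_sub, norm_neg, half_abs] at hw
  linarith

lemma zero_mem_ball (hR1 : 1/2 < R) : (0 : ℂ) ∈ ball (1/2 : ℂ) R := by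
  simp only [mem_ball, Complex.dist_eq, zero_sub, norm_neg, half_abs]
  exact hR1

lemma zero_not_mem_sphere (hR1 : 1/2 < R) : (0 : ℂ) ∉ sphere (1/2 : ℂ) R := fun h =>
  sphere_ne_zero hR1 h rfl

lemma circleIntegral_finset_sum {ι : Type*} (s : Finset ι) (f : ι → ℂ → ℂ) {c : ℂ} {R : ℝ}
    (h : ∀ i ∈ s, CircleIntegrable (f i) c R) :
    (∮ w in C(c, R), ∑ i ∈ s, f i w) = ∑ i ∈ s, ∮ w in C(c, R), f i w := by
  simp only [circleIntegral]
  rw [← intervalIntegral.integral_finset_sum (fun i hi => (h i hi).out)]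
  simp [Finset.mul_sum]

lemma integral_zpow (hR1 : 1/2 < R) (e : ℤ) :
    (∮ w in C(1/2, R), w ^ e) = if e = -1 then (2 * Real.pi * I) else 0 := by
  split_ifs with h
  · subst h
    have := circleIntegral.integral_sub_inv_of_mem_ball (zero_mem_ball hR1)
    simp only [sub_zero] at this
    rw [← this]
    apply circleIntegral.integral_congr (by linarith)
    intro w hw
    simp [zpow_neg_one]
  · have := circleIntegral.integral_sub_zpow_of_ne h (1/2 : ℂ) 0 R
    simp only [sub_zero] at this
    exact this

lemma circleIntegrable_zpow (hR1 : 1/2 < R) (e : ℤ) :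
    CircleIntegrable (fun w : ℂ => w ^ e) (1/2) R := by
  have : CircleIntegrable (fun w : ℂ => (w - 0) ^ e) (1/2) R := by
    rw [circleIntegrable_sub_zpow_iff]
    right; right
    rw [_root_.abs_of_nonneg (by linarith : (0:ℝ) ≤ R)]
    exact zero_not_mem_sphere hR1
  simpa using this

lemma circleIntegrable_const_mul_zpow (hR1 : 1/2 < R) (a : ℂ) (e : ℤ) :
    CircleIntegrable (fun w : ℂ => a * w ^ e) (1/2) R := by
  have h := circleIntegrable_zpow hR1 e
  unfold CircleIntegrable at h ⊢
  exact h.const_mul a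

noncomputable def coefS (p : ℝ) (x : ℤ) (t m : ℕ) : ℂ :=
  ∑ j ∈ range (t+1), ∑ k ∈ range (m+1),
    (((t.choose j : ℝ) * (1-p)^(t-j) * p^j * (m.choose k : ℝ) : ℝ) : ℂ) * (-1)^k *
      (if (x - 1 - (j:ℤ) + (k:ℤ) = -1) then 1 else 0)

lemma choose_le_two_pow' (m k : ℕ) : m.choose k ≤ 2^m := by
  rcases le_or_gt k m with h | h
  · calc m.choose k ≤ ∑ i ∈ range (m+1), m.choose i :=
        Finset.single_le_sum (fun i _ => Nat.zero_le _) (mem_range.2 (by omega))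
      _ = 2^m := Nat.sum_range_choose m
  · simp [Nat.choose_eq_zero_of_lt h]

lemma coefS_ne_zero_imp (x : ℤ) (t m : ℕ) (h : coefS p x t m ≠ 0) : -(m:ℤ) ≤ x := by
  by_contra hx
  apply h
  unfold coefS
  apply Finset.sum_eq_zero; intro j hj
  apply Finset.sum_eq_zero; intro k hk
  rw [mem_range] at hk
  rw [if_neg (by omega), mul_zero]

lemma sum_ite_cast_le (s : Finset ℕ) (c : ℤ) (B : ℝ) (hB : 0 ≤ B) :
    (∑ j ∈ s, if (j:ℤ) = c then B else 0) ≤ B := by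
  rcases le_or_gt 0 c with h | h
  · have hiff : ∀ j : ℕ, ((j:ℤ) = c) = (j = c.toNat) := fun j => by
      apply propext; omega
    simp only [hiff]
    rw [Finset.sum_ite_eq' s c.toNat (fun _ => B)]
    split_ifs
    · exact le_refl B
    · exact hB
  · rw [Finset.sum_eq_zero]
    · exact hB
    intro j hj; rw [if_neg (by omega)]

lemma coefS_norm_le (hp0 : 0 < p) (hp1 : p < 1) (x X : ℤ) (hx : x ≤ X) (t m : ℕ) :
    ‖coefS p x t m‖ ≤
      (m+1) * 2^m * ((t:ℝ)+1)^((X + m).toNat) * (1-p)^t / (1-p)^((X + m).toNat) := by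
  set J : ℕ := (X + m).toNat with hJ
  set q : ℝ := 1 - p with hq
  have hq0 : 0 < q := by simp [hq]; linarith
  have hq1 : q ≤ 1 := by simp [hq]; linarith
  set B0 : ℝ := ((t:ℝ)+1)^J * (q^t / q^J) * 2^m with hB0
  have hB0n : 0 ≤ B0 := by positivity
  have key : ∀ k ∈ range (m+1), ∀ j ∈ range (t+1),
      ‖(((t.choose j : ℝ) * q^(t-j) * p^j * (m.choose k : ℝ) : ℝ) : ℂ) * (-1)^k *
        (if (x - 1 - (j:ℤ) + (k:ℤ) = -1) then 1 else 0)‖ ≤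
      (if (j:ℤ) = x + k then B0 else 0) := by
    intro k hk j hj
    rw [mem_range] at hk hj
    by_cases hcond : x - 1 - (j:ℤ) + (k:ℤ) = -1
    · have hjx : (j:ℤ) = x + k := by omega
      rw [if_pos hcond, if_pos hjx, mul_one, norm_mul]
      have h1 : ‖((-1:ℂ))^k‖ = 1 := by
        rw [norm_pow, norm_neg, norm_one, one_pow]
      rw [h1, mul_one, Complex.norm_real]
      have hjJ : j ≤ J := by omega
      have hjt : j ≤ t := by omega
      have habs : |(t.choose j : ℝ) * q^(t-j) * p^j * (m.choose k : ℝ)|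
          = (t.choose j : ℝ) * q^(t-j) * p^j * (m.choose k : ℝ) := by
        apply _root_.abs_of_nonneg; positivity
      rw [Real.norm_eq_abs, habs, hB0]
      have h2 : (t.choose j : ℝ) ≤ ((t:ℝ)+1)^J := by
        calc (t.choose j : ℝ) ≤ (t:ℝ)^j := by exact_mod_cast Nat.choose_le_pow t j
          _ ≤ ((t:ℝ)+1)^j := by
            apply pow_le_pow_left₀ (by positivity) (by linarith)
          _ ≤ ((t:ℝ)+1)^J := by
            apply pow_le_pow_right₀ (by have := Nat.cast_nonneg (α:=ℝ) t; linarith) hjJ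
      have h3 : q^(t-j) ≤ q^t / q^J := by
        rw [pow_sub₀ q (ne_of_gt hq0) hjt]
        rw [div_eq_mul_inv]
        apply mul_le_mul_of_nonneg_left _ (by positivity)
        rw [inv_le_inv₀ (by positivity) (by positivity)]
        exact pow_le_pow_of_le_one hq0.le hq1 hjJ
      have h4 : (p:ℝ)^j ≤ 1 := pow_le_one₀ hp0.le hp1.le
      have h5 : (m.choose k : ℝ) ≤ 2^m := by exact_mod_cast choose_le_two_pow' m k
      calc (t.choose j : ℝ) * q^(t-j) * p^j * (m.choose k : ℝ)
          ≤ ((t:ℝ)+1)^J * (q^t/q^J) * 1 * 2^m := by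
            apply mul_le_mul (mul_le_mul (mul_le_mul h2 h3 (by positivity) (by positivity))
              h4 (by positivity) (by positivity)) h5 (by positivity) (by positivity)
        _ = ((t:ℝ)+1)^J * (q^t/q^J) * 2^m := by ring
    · rw [if_neg hcond, if_neg (by omega), mul_zero, norm_zero]
  calc ‖coefS p x t m‖ ≤ ∑ j ∈ range (t+1), ∑ k ∈ range (m+1),
        ‖(((t.choose j : ℝ) * q^(t-j) * p^j * (m.choose k : ℝ) : ℝ) : ℂ) * (-1)^k *
          (if (x - 1 - (j:ℤ) + (k:ℤ) = -1) then 1 else 0)‖ := by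
        unfold coefS
        rw [← hq]
        exact (norm_sum_le _ _).trans (Finset.sum_le_sum fun j _ => norm_sum_le _ _)
    _ = ∑ k ∈ range (m+1), ∑ j ∈ range (t+1), ‖_‖ := Finset.sum_comm
    _ ≤ ∑ k ∈ range (m+1), B0 := by
        apply Finset.sum_le_sum; intro k hk
        calc (∑ j ∈ range (t+1), ‖(((t.choose j : ℝ) * q^(t-j) * p^j * (m.choose k : ℝ) : ℝ) : ℂ)
              * (-1)^k * (if (x - 1 - (j:ℤ) + (k:ℤ) = -1) then 1 else 0)‖)
            ≤ ∑ j ∈ range (t+1), (if (j:ℤ) = x + k then B0 else 0) :=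
              Finset.sum_le_sum (fun j hj => key k hk j hj)
          _ ≤ B0 := sum_ite_cast_le _ _ _ hB0n
    _ = (m+1) * B0 := by
        rw [Finset.sum_const, card_range, nsmul_eq_mul]
        push_cast; ring
    _ = (m+1) * 2^m * ((t:ℝ)+1)^J * q^t / q^J := by rw [hB0]; ring
lemma integral_eval (hR1 : 1/2 < R) (x : ℤ) (t m : ℕ) :
    (∮ w in C(1/2, R), ((1 - p : ℂ) + p / w) ^ t * (1 - w) ^ m * w ^ (x - 1))
      = (2 * Real.pi * I) * coefS p x t m := by
  have h1 : Set.EqOn (fun w : ℂ => ((1 - p : ℂ) + p / w) ^ t * (1 - w) ^ m * w ^ (x - 1))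
      (fun w : ℂ => ∑ jk ∈ range (t+1) ×ˢ range (m+1),
        ((((t.choose jk.1 : ℝ) * (1-p)^(t-jk.1) * p^jk.1 * (m.choose jk.2 : ℝ) : ℝ) : ℂ)
          * (-1)^jk.2) * w ^ (x - 1 - (jk.1:ℤ) + (jk.2:ℤ))) (sphere (1/2:ℂ) R) := by
    intro w hw
    have hw0 : w ≠ 0 := sphere_ne_zero hR1 hw
    simp only
    rw [Finset.sum_product]
    rw [show ((1 - (p:ℂ)) + p / w) = ((p:ℂ)/w + (1-p)) from by ring, add_pow,
      show ((1 : ℂ) - w) = (-w + 1) from by ring, add_pow, Finset.sum_mul_sum, Finset.sum_mul]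
    apply Finset.sum_congr rfl; intro j hj
    rw [Finset.sum_mul]
    apply Finset.sum_congr rfl; intro k hk
    rw [div_pow, neg_pow, one_pow, div_eq_mul_inv, ← inv_pow, ← zpow_natCast w⁻¹ j, inv_zpow,
      ← zpow_neg, ← zpow_natCast w k,
      show x - 1 - (j:ℤ) + (k:ℤ) = -(j:ℤ) + ((k:ℤ) + (x-1)) from by ring,
      zpow_add₀ hw0, zpow_add₀ hw0]
    push_cast
    ring
  rw [circleIntegral.integral_congr (by linarith : (0:ℝ) ≤ R) h1,
    circleIntegral_finset_sum _ _ (fun jk _ => circleIntegrable_const_mul_zpow hR1 _ _)]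
  unfold coefS
  rw [← Finset.sum_product', Finset.mul_sum]
  apply Finset.sum_congr rfl; intro jk _
  rw [circleIntegral.integral_const_mul, integral_zpow hR1]
  split_ifs <;> ring

lemma two_pi_I_ne_zero : (2 * Real.pi * I : ℂ) ≠ 0 := by
  simp [Real.pi_ne_zero, I_ne_zero]

lemma Fhat_eval (hR1 : 1/2 < R) (ν : ℤ) (μ : ℕ) (hμ : -ν = (μ:ℤ)) (z : ℤ × ℤ) (hz : 0 ≤ z.2) :
    Fhat p R ν z = coefS p z.1 z.2.toNat μ := by
  obtain ⟨t, ht'⟩ := Int.eq_ofNat_of_zero_le hz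
  unfold Fhat
  rw [hμ, ht']
  simp only [zpow_natCast]
  rw [integral_eval hR1, Int.toNat_natCast, ← mul_assoc,
    inv_mul_cancel₀ two_pi_I_ne_zero, one_mul]

lemma integrand_integrable (hR1 : 1/2 < R) (s : ℤ) (hs : 0 ≤ s) (e : ℤ) (he : 0 ≤ e) (a : ℤ) :
    CircleIntegrable (fun w : ℂ => ((1-p:ℂ) + p/w)^s * (1-w)^e * w^(a-1)) (1/2) R := by
  obtain ⟨s', rfl⟩ := Int.eq_ofNat_of_zero_le hs
  obtain ⟨e', rfl⟩ := Int.eq_ofNat_of_zero_le he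
  simp only [zpow_natCast]
  apply ContinuousOn.circleIntegrable (by linarith : (0:ℝ) ≤ R)
  have hww : ∀ w ∈ sphere (1/2:ℂ) R, w ≠ 0 := fun w hw => sphere_ne_zero hR1 hw
  apply ContinuousOn.mul
  apply ContinuousOn.mul
  · exact (continuousOn_const.add (continuousOn_const.div continuousOn_id hww)).pow s'
  · exact (continuousOn_const.sub continuousOn_id).pow e'
  · exact continuousOn_id.zpow₀ _ (fun w hw => Or.inl (hww w hw))

lemma step_horiz (hR1 : 1/2 < R) {n : ℤ} (hn : n ≤ -1) (x s : ℤ) (hs : 0 ≤ s) :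
    Fhat p R (n+1) (x, s) - Fhat p R (n+1) (x+1, s) = Fhat p R n (x, s) := by
  obtain ⟨e, he⟩ : ∃ e : ℕ, -(n+1) = (e:ℤ) :=
    ⟨(-(n+1)).toNat, (Int.toNat_of_nonneg (by omega)).symm⟩
  have hR0 : (0:ℝ) ≤ R := by linarith
  have hmain : ((∮ w in C(1/2, R), ((1 - p : ℂ) + p / w) ^ s * (1 - w) ^ (-(n+1)) * w ^ (x - 1)) -
      ∮ w in C(1/2, R), ((1 - p : ℂ) + p / w) ^ s * (1 - w) ^ (-(n+1)) * w ^ (x + 1 - 1))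
      = ∮ w in C(1/2, R), ((1 - p : ℂ) + p / w) ^ s * (1 - w) ^ (-n) * w ^ (x - 1) := by
    rw [← circleIntegral.integral_sub
      (integrand_integrable hR1 _ hs (-(n+1)) (by omega) x)
      (integrand_integrable hR1 _ hs (-(n+1)) (by omega) (x+1))]
    apply circleIntegral.integral_congr hR0
    intro w hw
    have hw0 : w ≠ 0 := sphere_ne_zero hR1 hw
    simp only
    obtain ⟨s', rfl⟩ := Int.eq_ofNat_of_zero_le hs
    rw [he, show -n = ((e+1:ℕ):ℤ) from by omega]
    simp only [zpow_natCast]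
    rw [show x + 1 - 1 = (x - 1) + 1 from by ring, zpow_add_one₀ hw0]
    ring
  unfold Fhat
  simp only
  rw [← mul_sub, hmain]

lemma step_vert (hR1 : 1/2 < R) {n : ℤ} (hn : n ≤ -1) (x s : ℤ) (hs : 0 ≤ s) :
    Fhat p R (n+1) (x+1, s+1) - Fhat p R (n+1) (x+1, s) = p * Fhat p R n (x, s) := by
  obtain ⟨e, he⟩ : ∃ e : ℕ, -(n+1) = (e:ℤ) :=
    ⟨(-(n+1)).toNat, (Int.toNat_of_nonneg (by omega)).symm⟩
  have hR0 : (0:ℝ) ≤ R := by linarith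
  have hmain : ((∮ w in C(1/2, R), ((1 - p : ℂ) + p / w) ^ (s+1) * (1 - w) ^ (-(n+1)) * w ^ (x + 1 - 1)) -
      ∮ w in C(1/2, R), ((1 - p : ℂ) + p / w) ^ s * (1 - w) ^ (-(n+1)) * w ^ (x + 1 - 1))
      = (p:ℂ) * ∮ w in C(1/2, R), ((1 - p : ℂ) + p / w) ^ s * (1 - w) ^ (-n) * w ^ (x - 1) := by
    rw [← circleIntegral.integral_const_mul, ← circleIntegral.integral_sub
      (integrand_integrable hR1 _ (by omega) (-(n+1)) (by omega) (x+1))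
      (integrand_integrable hR1 _ hs (-(n+1)) (by omega) (x+1))]
    apply circleIntegral.integral_congr hR0
    intro w hw
    have hw0 : w ≠ 0 := sphere_ne_zero hR1 hw
    simp only
    obtain ⟨s', rfl⟩ := Int.eq_ofNat_of_zero_le hs
    rw [he, show -n = ((e+1:ℕ):ℤ) from by omega,
      show ((s':ℤ) + 1) = ((s'+1:ℕ):ℤ) from by omega]
    simp only [zpow_natCast]
    rw [show x + 1 - 1 = (x - 1) + 1 from by ring, zpow_add_one₀ hw0]
    linear_combination ((1 - (p:ℂ)) + p * w⁻¹) ^ s' * (1 - w) ^ e * w ^ (x - 1) * (p:ℂ) * mul_inv_cancel₀ hw0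
  unfold Fhat
  simp only
  rw [← mul_sub, hmain]
  ring

end TSB

open TSB in
theorem telescoping_series_boundary (p : ℝ) (hp0 : 0 < p) (hp1 : p < 1)
    (B : Boundary) (c₀ : ℤ × ℤ) (n : ℤ) (hn : n ≤ -1) (i₁ : ℤ)
    (ht : ∀ τ : ℤ, i₁ ≤ τ → c₀.2 ≤ (B.b τ).2)
    (R : ℝ) (hR1 : 1/2 < R) (hR2 : R < 1/2 + p / (1 - p)) :
    HasSum (fun m : ℕ => (exitWeight p B (i₁ + m) : ℂ) * Fhat p R n (B.b (i₁ + m) - c₀))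
      (-Fhat p R (n + 1) (B.b i₁ - c₀ + (1, 0))) := by
  classical
  obtain ⟨m, hm⟩ : ∃ m : ℕ, -(n+1) = (m:ℤ) :=
    ⟨(-(n+1)).toNat, (Int.toNat_of_nonneg (by omega)).symm⟩
  set Phi : ℤ → ℂ := fun τ => Fhat p R (n+1) (B.b τ - c₀ + (1,0)) with hPhi
  set f : ℕ → ℂ := fun M => (exitWeight p B (i₁ + M) : ℂ) * Fhat p R n (B.b (i₁ + M) - c₀)
    with hf
  -- step identity
  have hstep : ∀ τ : ℤ, i₁ ≤ τ →
      (exitWeight p B τ : ℂ) * Fhat p R n (B.b τ - c₀) = Phi (τ+1) - Phi τ := by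
    intro τ hτ
    have hs : 0 ≤ (B.b τ).2 - c₀.2 := by have := ht τ hτ; omega
    have e1 : B.b τ - c₀ = ((B.b τ).1 - c₀.1, (B.b τ).2 - c₀.2) := rfl
    have e3 : B.b τ - c₀ + (1,0) = ((B.b τ).1 - c₀.1 + 1, (B.b τ).2 - c₀.2) := by
      apply Prod.ext <;> simp
    rcases B.step τ with h | h
    · have hne : ¬ (B.b (τ+1) = B.b τ + (0,1)) := by
        rw [h]; intro hc
        have := add_left_cancel hc
        simp [Prod.ext_iff] at this
      have e2 : B.b (τ+1) - c₀ + (1,0) = ((B.b τ).1 - c₀.1, (B.b τ).2 - c₀.2) := by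
        rw [h]; apply Prod.ext <;> simp <;> ring
      rw [exitWeight, if_neg hne, hPhi]
      simp only
      rw [e2, e3, e1, ← step_horiz hR1 hn _ _ hs]
      push_cast
      ring
    · have heq : B.b (τ+1) = B.b τ + (0,1) := h
      have e2 : B.b (τ+1) - c₀ + (1,0) = ((B.b τ).1 - c₀.1 + 1, (B.b τ).2 - c₀.2 + 1) := by
        rw [h]; apply Prod.ext <;> simp <;> ring
      rw [exitWeight, if_pos heq, hPhi]
      simp only
      rw [e2, e3, e1, step_vert hR1 hn _ _ hs]
  -- partial sums telescope
  have hpartial : ∀ M : ℕ, (∑ k ∈ range M, f k) = Phi (i₁ + M) - Phi i₁ := by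
    intro M
    induction M with
    | zero => simp
    | succ M ih =>
      rw [Finset.sum_range_succ, ih, hf]
      simp only
      rw [hstep (i₁ + M) (by omega)]
      rw [show ((i₁ + ((M+1:ℕ):ℤ))) = i₁ + (M:ℤ) + 1 from by push_cast; ring]
      ring
  -- boundary monotonicity
  have hmono : ∀ M : ℕ, (B.b (i₁ + M)).1 ≤ (B.b i₁).1 ∧
      (B.b (i₁ + M)).2 - (B.b (i₁ + M)).1 = (B.b i₁).2 - (B.b i₁).1 + M := by
    intro M
    induction M with
    | zero => simp
    | succ M ih =>
      obtain ⟨ih1, ih2⟩ := ih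
      have hcast : i₁ + ((M+1:ℕ):ℤ) = (i₁ + M) + 1 := by push_cast; ring
      rcases B.step (i₁ + M) with h | h <;>
        · rw [hcast, h]
          constructor <;> simp <;> push_cast <;> omega
  -- evaluation of Phi
  have hPhiEval : ∀ M : ℕ, Phi (i₁ + M) =
      coefS p ((B.b (i₁+M)).1 - c₀.1 + 1) ((B.b (i₁+M)).2 - c₀.2).toNat m := by
    intro M
    have ez : B.b (i₁+M) - c₀ + (1,0) = ((B.b (i₁+M)).1 - c₀.1 + 1, (B.b (i₁+M)).2 - c₀.2) := by
      apply Prod.ext <;> simp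
    have hz : (0:ℤ) ≤ (B.b (i₁+M)).2 - c₀.2 := by
      have := ht (i₁+M) (by omega); omega
    rw [hPhi]
    simp only
    rw [ez, Fhat_eval hR1 (n+1) m hm _ hz]
  -- constants
  set q : ℝ := 1 - p with hqdef
  have hq0 : 0 < q := by rw [hqdef]; linarith
  have hq1 : q < 1 := by rw [hqdef]; linarith
  set r : ℝ := (1 + q)/2 with hrdef
  have hr0 : 0 < r := by rw [hrdef]; linarith
  have hr1 : r < 1 := by rw [hrdef]; linarith
  have hqr : q < r := by rw [hrdef]; linarith
  set X : ℤ := (B.b i₁).1 - c₀.1 + 1 with hX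
  set J : ℕ := (X + m).toNat with hJ
  -- geometric domination of (T+1)^J * q^T
  obtain ⟨C₁, hC₁⟩ : ∃ C₁ : ℝ, ∀ T : ℕ, ((T:ℝ)+1)^J * q^T ≤ C₁ * r^T := by
    have hs0 : (0:ℝ) ≤ q/r := by positivity
    have hs1 : q/r < 1 := (div_lt_one hr0).2 hqr
    have hsne : q/r ≠ 0 := by positivity
    have htend : Filter.Tendsto (fun T : ℕ => ((T:ℝ)+1)^J * (q/r)^T) Filter.atTop (nhds 0) := by
      have h1 := tendsto_pow_const_mul_const_pow_of_lt_one J hs0 hs1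
      have h2 := (h1.comp (Filter.tendsto_add_atTop_nat 1)).mul_const (q/r)⁻¹
      have h3 : (fun T : ℕ => (((T+1:ℕ):ℝ))^J * (q/r)^(T+1) * (q/r)⁻¹)
          = fun T : ℕ => ((T:ℝ)+1)^J * (q/r)^T := by
        funext T
        push_cast
        rw [pow_succ]
        field_simp
      rw [Function.comp_def] at h2
      rw [h3] at h2
      simpa using h2
    obtain ⟨C₁, hC₁⟩ := htend.bddAbove_range
    refine ⟨C₁, fun T => ?_⟩
    have hT : ((T:ℝ)+1)^J * (q/r)^T ≤ C₁ := hC₁ ⟨T, rfl⟩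
    have := mul_le_mul_of_nonneg_right hT (le_of_lt (pow_pos hr0 T))
    calc ((T:ℝ)+1)^J * q^T = ((T:ℝ)+1)^J * (q/r)^T * r^T := by
          rw [div_pow, mul_assoc, div_mul_cancel₀]
          positivity
      _ ≤ C₁ * r^T := this
  have hC₁0 : 0 ≤ C₁ := by
    have := hC₁ 0
    simp at this
    nlinarith
  set d : ℤ := ((B.b i₁).2 - c₀.2) - X with hd
  set C : ℝ := ((m:ℝ)+1) * 2^m * C₁ / q^J * r^(d - m : ℤ) with hC
  have hC0 : 0 ≤ C := by
    rw [hC]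
    have : (0:ℝ) < r^(d - m : ℤ) := zpow_pos hr0 _
    positivity
  -- the crucial norm bound
  have hbound : ∀ M : ℕ, ‖Phi (i₁ + M)‖ ≤ C * r^M := by
    intro M
    rw [hPhiEval M]
    set xM : ℤ := (B.b (i₁+M)).1 - c₀.1 + 1 with hxM
    set tM : ℤ := (B.b (i₁+M)).2 - c₀.2 with htM
    have htM0 : 0 ≤ tM := by have := ht (i₁+M) (by omega); omega
    by_cases h0 : coefS p xM tM.toNat m = 0
    · rw [h0, norm_zero]; positivity
    · obtain ⟨h1, h2⟩ := hmono M
      have hxX : xM ≤ X := by omega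
      have hxm : -(m:ℤ) ≤ xM := coefS_ne_zero_imp _ _ _ h0
      have htMd : (M:ℤ) + d - m ≤ tM := by omega
      set T : ℕ := tM.toNat with hT
      have hTZ : (T:ℤ) = tM := Int.toNat_of_nonneg htM0
      have hb1 : ‖coefS p xM T m‖ ≤ ((m:ℝ)+1) * 2^m * ((T:ℝ)+1)^J * q^T / q^J := by
        have := coefS_norm_le hp0 hp1 xM X hxX T m
        rw [← hqdef, ← hJ] at this
        convert this using 3
      have hb2 : ((T:ℝ)+1)^J * q^T ≤ C₁ * r^T := hC₁ T
      have hb3 : r^(T:ℤ) ≤ r^((M:ℤ) + d - m) := by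
        apply zpow_le_zpow_right_of_le_one₀ hr0 hr1.le
        omega
      calc ‖coefS p xM T m‖ ≤ ((m:ℝ)+1) * 2^m * ((T:ℝ)+1)^J * q^T / q^J := hb1
        _ = ((m:ℝ)+1) * 2^m / q^J * (((T:ℝ)+1)^J * q^T) := by ring
        _ ≤ ((m:ℝ)+1) * 2^m / q^J * (C₁ * r^T) := by
            apply mul_le_mul_of_nonneg_left hb2
            positivity
        _ = ((m:ℝ)+1) * 2^m * C₁ / q^J * r^(T:ℤ) := by rw [zpow_natCast]; ring
        _ ≤ ((m:ℝ)+1) * 2^m * C₁ / q^J * r^((M:ℤ) + d - m) := by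
            apply mul_le_mul_of_nonneg_left hb3
            positivity
        _ = C * r^M := by
            rw [hC, show (M:ℤ) + d - m = (d - m) + (M:ℤ) from by ring,
              zpow_add₀ (ne_of_gt hr0), zpow_natCast]
            ring
  -- limits and summability
  have hPhi0 : Filter.Tendsto (fun M : ℕ => Phi (i₁ + M)) Filter.atTop (nhds 0) := by
    apply squeeze_zero_norm hbound
    have := (tendsto_pow_atTop_nhds_zero_of_lt_one hr0.le hr1).const_mul C
    simpa using this
  have hfsummable : Summable f := by
    apply Summable.of_norm
    have hcomp : Summable (fun M : ℕ => (C*r + C) * r^M) :=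
      (summable_geometric_of_lt_one hr0.le hr1).mul_left _
    apply Summable.of_nonneg_of_le (fun M => norm_nonneg _) _ hcomp
    intro M
    have heq : f M = Phi (i₁ + M + 1) - Phi (i₁ + M) := hstep (i₁ + M) (by omega)
    rw [heq]
    have hb1 := hbound (M+1)
    have hb2 := hbound M
    rw [show (i₁ + ((M+1:ℕ):ℤ)) = i₁ + (M:ℤ) + 1 from by push_cast; ring] at hb1
    calc ‖Phi (i₁ + M + 1) - Phi (i₁ + M)‖ ≤ ‖Phi (i₁ + (M:ℤ) + 1)‖ + ‖Phi (i₁ + M)‖ :=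
          norm_sub_le _ _
      _ ≤ C * r^(M+1) + C * r^M := add_le_add hb1 hb2
      _ = (C*r + C) * r^M := by ring
  -- conclusion
  have hhs : HasSum f (∑' M, f M) := hfsummable.hasSum
  have h5 : Filter.Tendsto (fun M => ∑ k ∈ range M, f k) Filter.atTop (nhds (∑' M, f M)) :=
    hhs.tendsto_sum_nat
  have h6 : Filter.Tendsto (fun M => ∑ k ∈ range M, f k) Filter.atTop (nhds (0 - Phi i₁)) := by
    simp only [hpartial]
    exact hPhi0.sub_const (Phi i₁)
  have h7 : (∑' M, f M) = -Phi i₁ := by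
    rw [tendsto_nhds_unique h5 h6]
    ring
  rw [h7] at hhs
  exact hhs
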